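/- arXiv:math/0304387 — 5 statements merged into one kernel-verified Lean document; each statement's English description precedes it below -/
import Mathlib

section
/- Let n ≥ 1 and let a_1,...,a_n ≥ 0 be real numbers with ∑ a_j = n. Then there exists an orthonormal basis v_1,...,v_n of ℝ^n such that each v_j lies on the ellipsoid {x ∈ ℝ^n : ∑ a_j x_j² = 1}. -/
open RealInnerProductSpace

private lemma ellipsoid_sum_two {N : ℕ} {p q : Fin N} (hpq : p ≠ q) (X Y : ℝ)
    (f : Fin N → ℝ)
    (hf : ∀ i, f i = (if i = p then X else 0) + (if i = q then Y else 0)) :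
    ∑ i, f i = X + Y := by
  simp [hf, Finset.sum_add_distrib]

private lemma ellipsoid_euc_inner {N : ℕ} (x y : EuclideanSpace ℝ (Fin N)) :
    ⟪x, y⟫ = ∑ i, x i * y i := by
  simp [PiLp.inner_apply, RCLike.inner_apply, conj_trivial, mul_comm]

set_option maxHeartbeats 1000000 in
private theorem ellipsoid_key : ∀ (n : ℕ) (a : Fin n → ℝ), (∀ j, 0 ≤ a j) →
    (∑ j, a j = (n : ℝ)) →
    ∃ v : Fin n → EuclideanSpace ℝ (Fin n),
      Orthonormal ℝ v ∧ ∀ j, ∑ i, a i * (v j i) ^ 2 = 1 := by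
  intro n
  induction n with
  | zero =>
    intro a _ _
    exact ⟨Fin.elim0, ⟨fun i => i.elim0, fun i => i.elim0⟩, fun j => j.elim0⟩
  | succ m ih =>
    cases m with
    | zero =>
      intro a ha hsum
      refine ⟨fun _ => EuclideanSpace.single 0 1, ?_, ?_⟩
      · constructor
        · intro i
          simp [EuclideanSpace.norm_single]
        · intro i j hij
          exact absurd (Fin.ext (by omega)) hij
      · intro j
        have h0 : a 0 = 1 := by simpa using hsum
        simp [EuclideanSpace.single_apply, h0]
    | succ k =>
      intro a ha hsum
      classical
      -- find p ≠ q with a p ≤ 1 ≤ a q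
      obtain ⟨p, q, hpq, hap, haq⟩ :
          ∃ p q : Fin (k + 2), p ≠ q ∧ a p ≤ 1 ∧ 1 ≤ a q := by
        obtain ⟨p, hp⟩ : ∃ p : Fin (k + 2), a p ≤ 1 := by
          by_contra h
          push_neg at h
          have h2 : ((k + 1 + 1 : ℕ) : ℝ) < ∑ j, a j := by
            calc ((k + 1 + 1 : ℕ) : ℝ) = ∑ _j : Fin (k + 2), (1 : ℝ) := by simp; ring
            _ < ∑ j, a j :=
              Finset.sum_lt_sum_of_nonempty ⟨0, Finset.mem_univ 0⟩ (fun j _ => h j)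
          linarith [hsum]
        obtain ⟨r, hr⟩ : ∃ r : Fin (k + 2), 1 ≤ a r := by
          by_contra h
          push_neg at h
          have h2 : ∑ j, a j < ((k + 1 + 1 : ℕ) : ℝ) := by
            calc ∑ j, a j < ∑ _j : Fin (k + 2), (1 : ℝ) :=
              Finset.sum_lt_sum_of_nonempty ⟨0, Finset.mem_univ 0⟩ (fun j _ => h j)
            _ = ((k + 1 + 1 : ℕ) : ℝ) := by simp; ring
          linarith [hsum]
        by_cases hpr : p = r
        · obtain ⟨q', hq'⟩ := exists_ne p
          rcases le_total (a q') 1 with h | h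
          · exact ⟨q', p, hq', h, by rw [hpr]; exact hr⟩
          · exact ⟨p, q', Ne.symm hq', hp, h⟩
        · exact ⟨p, r, hpr, hp, hr⟩
      -- the rotation coefficients
      obtain ⟨c, s, hcs, hpq1⟩ :
          ∃ c s : ℝ, c ^ 2 + s ^ 2 = 1 ∧ a p * c ^ 2 + a q * s ^ 2 = 1 := by
        by_cases h : a p < a q
        · have hden : 0 < a q - a p := by linarith
          have hne : a q - a p ≠ 0 := hden.ne'
          have ht0 : 0 ≤ (1 - a p) / (a q - a p) := div_nonneg (by linarith) hden.le
          have ht1 : (1 - a p) / (a q - a p) ≤ 1 := by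
            rw [div_le_one hden]; linarith
          refine ⟨Real.sqrt (1 - (1 - a p) / (a q - a p)),
            Real.sqrt ((1 - a p) / (a q - a p)), ?_, ?_⟩
          · rw [Real.sq_sqrt (by linarith), Real.sq_sqrt ht0]; ring
          · rw [Real.sq_sqrt (by linarith), Real.sq_sqrt ht0]
            field_simp
            ring
        · have h2 : a p = 1 := le_antisymm hap (by linarith)
          have h3 : a q = 1 := le_antisymm (by linarith) haq
          exact ⟨1, 0, by norm_num, by rw [h2, h3]; norm_num⟩
      set b : ℝ := a p + a q - 1 with hb
      have hb0 : 0 ≤ b := by have := ha p; simp only [hb]; linarith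
      have hu0Q : a p * s ^ 2 + a q * c ^ 2 = b := by
        have h1 : s ^ 2 = 1 - c ^ 2 := by linarith
        rw [h1] at hpq1 ⊢
        simp only [hb]; linarith
      set E : Fin (k + 2) → EuclideanSpace ℝ (Fin (k + 2)) :=
        fun i => EuclideanSpace.single i 1 with hE
      set v0 : EuclideanSpace ℝ (Fin (k + 2)) := c • E p + s • E q with hv0
      set u0 : EuclideanSpace ℝ (Fin (k + 2)) := (-s) • E p + c • E q with hu0
      set σ : Fin (k + 1) ≃ {x : Fin (k + 2) // x ≠ p} := finSuccAboveEquiv p with hσ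
      set a' : Fin (k + 1) → ℝ :=
        fun j => if (σ j : Fin (k + 2)) = q then b else a (σ j) with ha'def
      set u : Fin (k + 1) → EuclideanSpace ℝ (Fin (k + 2)) :=
        fun j => if (σ j : Fin (k + 2)) = q then u0 else E (σ j) with hudef
      have hqp : q ≠ p := Ne.symm hpq
      -- coordinates
      have hEco : ∀ i i' : Fin (k + 2), E i i' = if i' = i then 1 else 0 := by
        intro i i'; simp [hE, EuclideanSpace.single_apply]
      have hv0co : ∀ i, v0 i = (if i = p then c else 0) + (if i = q then s else 0) := by
        intro i
        simp only [hv0, PiLp.add_apply, PiLp.smul_apply, hEco, smul_eq_mul]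
        by_cases h1 : i = p <;> by_cases h2 : i = q <;>
          simp [h1, h2, hpq, hqp] <;> first | ring | (exfalso; exact hpq (h1 ▸ h2 ▸ rfl))
      have hu0co : ∀ i, u0 i = (if i = p then -s else 0) + (if i = q then c else 0) := by
        intro i
        simp only [hu0, PiLp.add_apply, PiLp.smul_apply, hEco, smul_eq_mul]
        by_cases h1 : i = p <;> by_cases h2 : i = q <;>
          simp [h1, h2, hpq, hqp] <;> first | ring | (exfalso; exact hpq (h1 ▸ h2 ▸ rfl))
      have hv0v0 : ⟪v0, v0⟫ = 1 := by
        rw [ellipsoid_euc_inner]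
        rw [ellipsoid_sum_two hpq (c * c) (s * s) _ ?_]
        · nlinarith [hcs]
        · intro i
          rw [hv0co]
          by_cases h1 : i = p <;> by_cases h2 : i = q <;>
            simp [h1, h2, hpq, hqp] <;> first | ring |
              (exfalso; exact hpq (h1 ▸ h2 ▸ rfl))
      have hv0u0 : ⟪v0, u0⟫ = 0 := by
        rw [ellipsoid_euc_inner]
        rw [ellipsoid_sum_two hpq (c * (-s)) (s * c) _ ?_]
        · ring
        · intro i
          rw [hv0co, hu0co]
          by_cases h1 : i = p <;> by_cases h2 : i = q <;>
            simp [h1, h2, hpq, hqp] <;> first | ring |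
              (exfalso; exact hpq (h1 ▸ h2 ▸ rfl))
      have hu0u0 : ⟪u0, u0⟫ = 1 := by
        rw [ellipsoid_euc_inner]
        rw [ellipsoid_sum_two hpq ((-s) * (-s)) (c * c) _ ?_]
        · nlinarith [hcs]
        · intro i
          rw [hu0co]
          by_cases h1 : i = p <;> by_cases h2 : i = q <;>
            simp [h1, h2, hpq, hqp] <;> first | ring |
              (exfalso; exact hpq (h1 ▸ h2 ▸ rfl))
      have hEv0 : ∀ i, i ≠ p → i ≠ q → ⟪E i, v0⟫ = 0 := by
        intro i h1 h2
        rw [ellipsoid_euc_inner]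
        apply Finset.sum_eq_zero
        intro i' _
        rw [hEco, hv0co]
        by_cases h3 : i' = i <;> simp [h3, h1, h2]
      have hEu0 : ∀ i, i ≠ p → i ≠ q → ⟪E i, u0⟫ = 0 := by
        intro i h1 h2
        rw [ellipsoid_euc_inner]
        apply Finset.sum_eq_zero
        intro i' _
        rw [hEco, hu0co]
        by_cases h3 : i' = i <;> simp [h3, h1, h2]
      have hEE : ∀ i i' : Fin (k + 2), ⟪E i, E i'⟫ = if i = i' then 1 else 0 := by
        intro i i'
        simp [hE, EuclideanSpace.inner_single_left, EuclideanSpace.single_apply, eq_comm]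
      have hσne : ∀ j, (σ j : Fin (k + 2)) ≠ p := fun j => (σ j).2
      have hσinj : ∀ j l, (σ j : Fin (k + 2)) = (σ l : Fin (k + 2)) → j = l := by
        intro j l h
        exact σ.injective (Subtype.ext h)
      -- orthonormality of u and orthogonality to v0
      have hv0u : ∀ j, ⟪v0, u j⟫ = 0 := by
        intro j
        simp only [hudef]
        by_cases h : (σ j : Fin (k + 2)) = q
        · simpa [h] using hv0u0
        · rw [if_neg h, real_inner_comm]
          exact hEv0 _ (hσne j) h
      have hu_on : Orthonormal ℝ u := by
        rw [orthonormal_iff_ite]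
        intro j l
        simp only [hudef]
        by_cases h1 : (σ j : Fin (k + 2)) = q <;> by_cases h2 : (σ l : Fin (k + 2)) = q
        · have : j = l := hσinj j l (h1.trans h2.symm)
          have hn : ‖u0‖ = 1 := by
            have := real_inner_self_eq_norm_sq u0
            rw [hu0u0] at this
            nlinarith [norm_nonneg u0]
          simp [h1, h2, this, hu0u0, hn]
        · have hjl : j ≠ l := fun h => h2 (h ▸ h1)
          rw [if_pos h1, if_neg h2, if_neg hjl, real_inner_comm]
          exact hEu0 _ (hσne l) h2
        · have hjl : j ≠ l := fun h => h1 (h ▸ h2)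
          rw [if_neg h1, if_pos h2, if_neg hjl]
          exact hEu0 _ (hσne j) h1
        · rw [if_neg h1, if_neg h2, hEE]
          congr 1
          simp only [eq_iff_iff]
          constructor
          · exact hσinj j l
          · intro h; rw [h]
      -- the Q-bilinear form on u
      have hQu : ∀ j l, (∑ i, a i * (u j i * u l i)) = if j = l then a' j else 0 := by
        intro j l
        by_cases h1 : (σ j : Fin (k + 2)) = q <;> by_cases h2 : (σ l : Fin (k + 2)) = q
        · have hjl : j = l := hσinj j l (h1.trans h2.symm)
          subst hjl
          simp only [hudef, ha'def, h1, if_true]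
          rw [ellipsoid_sum_two hpq (a p * (-s * -s)) (a q * (c * c)) _ ?_]
          · linear_combination hu0Q
          · intro i
            rw [hu0co]
            by_cases h3 : i = p <;> by_cases h4 : i = q <;>
              simp [h3, h4, hpq, hqp] <;> first | ring |
                (exfalso; exact hpq (h3 ▸ h4 ▸ rfl))
        · have hjl : j ≠ l := fun h => h2 (h ▸ h1)
          rw [if_neg hjl]
          apply Finset.sum_eq_zero
          intro i _
          simp only [hudef, if_pos h1, if_neg h2]
          rw [hu0co, hEco]
          by_cases h3 : i = (σ l : Fin (k + 2))
          · have h4 : i ≠ p := h3 ▸ hσne l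
            have h5 : i ≠ q := h3 ▸ h2
            simp [h4, h5]
          · simp [h3]
        · have hjl : j ≠ l := fun h => h1 (h ▸ h2)
          rw [if_neg hjl]
          apply Finset.sum_eq_zero
          intro i _
          simp only [hudef, if_neg h1, if_pos h2]
          rw [hu0co, hEco]
          by_cases h3 : i = (σ j : Fin (k + 2))
          · have h4 : i ≠ p := h3 ▸ hσne j
            have h5 : i ≠ q := h3 ▸ h1
            simp [h4, h5]
          · simp [h3]
        · by_cases hjl : j = l
          · subst hjl
            simp only [hudef, ha'def, if_neg h1, if_pos rfl]
            have hco : ∀ i, a i * (E (σ j) i * E (σ j) i) =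
                if i = (σ j : Fin (k + 2)) then a (σ j) else 0 := by
              intro i
              rw [hEco]
              by_cases h3 : i = (σ j : Fin (k + 2)) <;> simp [h3]
            simp [hco]
          · rw [if_neg hjl]
            apply Finset.sum_eq_zero
            intro i _
            simp only [hudef, if_neg h1, if_neg h2]
            rw [hEco, hEco]
            have hne : (σ j : Fin (k + 2)) ≠ (σ l : Fin (k + 2)) :=
              fun h => hjl (hσinj _ _ h)
            by_cases h3 : i = (σ j : Fin (k + 2))
            · simp [h3, hne]
            · simp [h3]
      -- the new weights
      have ha' : ∀ j, 0 ≤ a' j := by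
        intro j
        simp only [ha'def]
        split
        · exact hb0
        · exact ha _
      have hsum' : ∑ j, a' j = ((k + 1 : ℕ) : ℝ) := by
        have hqmem : q ∈ Finset.univ.erase p :=
          Finset.mem_erase.2 ⟨hqp, Finset.mem_univ q⟩
        have h1 : ∑ j, a' j =
            ∑ x : {x : Fin (k + 2) // x ≠ p},
              (if (x : Fin (k + 2)) = q then b else a x) :=
          Fintype.sum_equiv σ _ _ (fun j => rfl)
        have h2 : ∑ x : {x : Fin (k + 2) // x ≠ p},
              (if (x : Fin (k + 2)) = q then b else a x) =
            ∑ i ∈ Finset.univ.erase p, (if i = q then b else a i) :=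
          by
          have hmem : ∀ x : Fin (k + 2), x ∈ Finset.univ.erase p ↔ x ≠ p := by
            intro x; simp [Finset.mem_erase]
          exact (Finset.sum_subtype (Finset.univ.erase p) hmem
            (fun i => if i = q then b else a i)).symm
        have h3 : ∑ i ∈ Finset.univ.erase p, (if i = q then b else a i) =
            b + ∑ i ∈ (Finset.univ.erase p).erase q, a i := by
          rw [← Finset.add_sum_erase _ _ hqmem, if_pos rfl]
          congr 1
          refine Finset.sum_congr rfl fun i hi => ?_
          rw [if_neg (Finset.ne_of_mem_erase hi)]
        have h4 : ∑ i ∈ (Finset.univ.erase p).erase q, a i =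
            (∑ i, a i) - a p - a q := by
          rw [Finset.sum_erase_eq_sub hqmem, Finset.sum_erase_eq_sub (Finset.mem_univ p)]
        rw [h1, h2, h3, h4, hsum]
        push_cast
        simp only [hb]
        ring
      obtain ⟨w, hw_on, hw_sum⟩ := ih a' ha' hsum'
      -- the final basis
      refine ⟨Fin.cons v0 (fun j => ∑ t, w j t • u t), ?_, ?_⟩
      · rw [orthonormal_iff_ite]
        intro i j
        refine Fin.cases ?_ ?_ i <;> [skip; intro i'] <;> refine Fin.cases ?_ ?_ j
        · simpa using hv0v0
        · intro j'
          rw [Fin.cons_zero, Fin.cons_succ, inner_sum]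
          simp only [real_inner_smul_right, hv0u, mul_zero, Finset.sum_const_zero]
          simp [(Fin.succ_ne_zero j').symm]
        · rw [Fin.cons_zero, Fin.cons_succ, real_inner_comm, inner_sum]
          simp only [real_inner_smul_right, hv0u, mul_zero, Finset.sum_const_zero]
          simp [Fin.succ_ne_zero i']
        · intro j'
          rw [Fin.cons_succ, Fin.cons_succ, hu_on.inner_sum]
          have h2 : ∑ t, w i' t * w j' t = if i' = j' then 1 else 0 := by
            rw [← ellipsoid_euc_inner]
            exact orthonormal_iff_ite.mp hw_on i' j'
          simpa [Fin.succ_inj, conj_trivial] using h2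
      · intro j
        refine Fin.cases ?_ ?_ j
        · rw [Fin.cons_zero]
          rw [ellipsoid_sum_two hpq (a p * c ^ 2) (a q * s ^ 2) _ ?_]
          · exact hpq1
          · intro i
            rw [hv0co]
            by_cases h1 : i = p <;> by_cases h2 : i = q <;>
              simp [h1, h2, hpq, hqp] <;> first | ring |
                (exfalso; exact hpq (h1 ▸ h2 ▸ rfl))
        · intro j'
          rw [Fin.cons_succ]
          have happ : ∀ i, ((∑ t, w j' t • u t : EuclideanSpace ℝ (Fin (k + 2))) i) =
              ∑ t, w j' t * u t i := by
            intro i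
            rw [WithLp.ofLp_sum, Finset.sum_apply i _ _]
            simp [PiLp.smul_apply]
          calc ∑ i, a i * ((∑ t, w j' t • u t : EuclideanSpace ℝ (Fin (k + 2))) i) ^ 2
              = ∑ i, ∑ t, ∑ l, w j' t * w j' l * (a i * (u t i * u l i)) := by
                refine Finset.sum_congr rfl fun i _ => ?_
                rw [happ, sq, Finset.sum_mul_sum, Finset.mul_sum]
                refine Finset.sum_congr rfl fun t _ => ?_
                rw [Finset.mul_sum]
                refine Finset.sum_congr rfl fun l _ => ?_
                ring
            _ = ∑ t, ∑ l, ∑ i, w j' t * w j' l * (a i * (u t i * u l i)) := by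
                rw [Finset.sum_comm]
                refine Finset.sum_congr rfl fun t _ => ?_
                rw [Finset.sum_comm]
            _ = ∑ t, ∑ l, w j' t * w j' l * ∑ i, a i * (u t i * u l i) := by
                simp_rw [Finset.mul_sum]
            _ = ∑ t, w j' t * w j' t * a' t := by
                refine Finset.sum_congr rfl fun t _ => ?_
                simp only [hQu, mul_ite, mul_zero]
                rw [Finset.sum_ite_eq]
                simp
            _ = ∑ t, a' t * (w j' t) ^ 2 := by
                refine Finset.sum_congr rfl fun t _ => ?_
                ring
            _ = 1 := hw_sum j'

/-- Every ellipsoid `{x : ∑ aⱼ xⱼ² = 1}` in ℝⁿ with `∑ aⱼ = n`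
contains an orthonormal basis of ℝⁿ. -/
theorem ellipsoid_contains_orthonormal_basis
    (n : ℕ) (hn : 1 ≤ n) (a : Fin n → ℝ) (ha : ∀ j, 0 ≤ a j)
    (hsum : ∑ j, a j = (n : ℝ)) :
    ∃ v : Fin n → EuclideanSpace ℝ (Fin n),
      Orthonormal ℝ v ∧
      Submodule.span ℝ (Set.range v) = ⊤ ∧
      ∀ j, ∑ i, a i * (v j i) ^ 2 = 1 := by
  obtain ⟨v, hv, hq⟩ := ellipsoid_key n a ha hsum
  have : Nonempty (Fin n) := Fin.pos_iff_nonempty.mp hn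
  exact ⟨v, hv,
    hv.linearIndependent.span_eq_top_of_card_eq_finrank (by simp [finrank_euclideanSpace]), hq⟩
end

section
/- Let n ≤ k be positive integers and a_1,...,a_n ≥ 0 with r := ∑ a_j > 0. Then there exist k vectors u_1,...,u_k in the ellipsoid E = {x ∈ ℝ^n : ∑ a_j x_j² = 1} forming a tight frame for ℝ^n, i.e., there is a constant K > 0 such that for all x ∈ ℝ^n, ∑_{i=1}^k ⟨x, u_i⟩² = K‖x‖². -/
open Matrix Finset

section
variable {k : ℕ}

lemma sum_ite_pair {p q : Fin k} (hpq : p ≠ q) (A B : ℝ) (f : Fin k → ℝ) :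
    ∑ l, (if l = p then A else if l = q then B else 0) * f l = A * f p + B * f q := by
  have h : ∀ l, (if l = p then A else if l = q then B else 0) * f l
      = (if l = p then A * f l else 0) + (if l = q then B * f l else 0) := by
    intro l
    by_cases h1 : l = p
    · subst h1; simp [hpq]
    · by_cases h2 : l = q <;> simp [h1, h2, Ne.symm hpq]
  rw [Finset.sum_congr rfl (fun l _ => h l), Finset.sum_add_distrib,
    Finset.sum_ite_eq' Finset.univ, Finset.sum_ite_eq' Finset.univ]
  simp

lemma sum_ite_pair' {p q : Fin k} (hpq : p ≠ q) (A B : ℝ) (f : Fin k → ℝ) :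
    ∑ l, f l * (if l = p then A else if l = q then B else 0) = f p * A + f q * B := by
  have := sum_ite_pair hpq A B f
  simp_rw [mul_comm] at this ⊢
  exact this

lemma sum_ite_single (b : Fin k) (f : Fin k → ℝ) :
    ∑ l, (if l = b then (1:ℝ) else 0) * f l = f b := by
  simp_rw [ite_mul, one_mul, zero_mul]
  rw [Finset.sum_ite_eq' Finset.univ]
  simp

lemma rot_exists (B : Matrix (Fin k) (Fin k) ℝ) (hB : B.IsSymm)
    (p q : Fin k) (hpq : p ≠ q) (t : ℝ) (ht : t ∈ Set.uIcc (B p p) (B q q)) :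
    ∃ R : Matrix (Fin k) (Fin k) ℝ, Rᵀ * R = 1 ∧ (R * B * Rᵀ) p p = t := by
  have hqp : q ≠ p := Ne.symm hpq
  set g : ℝ → ℝ := fun θ => (Real.cos θ)^2 * B p p + 2 * Real.cos θ * Real.sin θ * B p q
      + (Real.sin θ)^2 * B q q with hg
  have hg0 : g 0 = B p p := by simp [hg]
  have hg1 : g (Real.pi/2) = B q q := by simp [hg]
  have hcont : ContinuousOn g (Set.uIcc 0 (Real.pi/2)) := by
    apply Continuous.continuousOn; fun_prop
  obtain ⟨θ, -, hθ⟩ := intermediate_value_uIcc hcont (by rw [hg0, hg1]; exact ht)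
  set c := Real.cos θ with hc
  set s := Real.sin θ with hs
  have hcs : c^2 + s^2 = 1 := by
    rw [hc, hs]; exact Real.cos_sq_add_sin_sq θ
  set R : Matrix (Fin k) (Fin k) ℝ := Matrix.of (fun l i =>
      if l = p then (if i = p then c else if i = q then s else 0)
      else if l = q then (if i = p then -s else if i = q then c else 0)
      else if l = i then 1 else 0) with hR
  have hcolp : ∀ l, R l p = if l = p then c else if l = q then -s else 0 := by
    intro l
    by_cases h1 : l = p
    · simp [hR, h1, hpq, hqp]
    · by_cases h2 : l = q <;> simp [hR, h1, h2, hpq, hqp]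
  have hcolq : ∀ l, R l q = if l = p then s else if l = q then c else 0 := by
    intro l
    by_cases h1 : l = p
    · simp [hR, h1, hpq, hqp]
    · by_cases h2 : l = q <;> simp [hR, h1, h2, hpq, hqp]
  have hcolo : ∀ i, i ≠ p → i ≠ q → ∀ l, R l i = if l = i then 1 else 0 := by
    intro i hip hiq l
    by_cases h1 : l = p
    · simp [hR, h1, Ne.symm hip, Ne.symm hiq, hip, hiq, hpq, hqp]
    · by_cases h2 : l = q <;> simp [hR, h1, h2, Ne.symm hip, Ne.symm hiq, hip, hiq, hpq, hqp]
  have hrowp : ∀ l, R p l = if l = p then c else if l = q then s else 0 := by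
    intro l; simp [hR]
  refine ⟨R, ?_, ?_⟩
  · ext i j
    rw [Matrix.mul_apply]
    simp only [Matrix.transpose_apply, Matrix.one_apply]
    by_cases hi : i = p
    · by_cases hj : j = p
      · rw [hi, hj]
        simp_rw [hcolp]
        rw [sum_ite_pair hpq]
        simp [hqp]
        nlinarith [hcs]
      · by_cases hjq : j = q
        · rw [hi, hjq]
          simp_rw [hcolp, hcolq]
          rw [sum_ite_pair hpq]
          simp [hpq, hqp]
          ring
        · have hj' : p ≠ j := fun h => hj h.symm
          have hjq' : q ≠ j := fun h => hjq h.symm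
          rw [hi]
          simp_rw [hcolp, hcolo j hj hjq]
          rw [sum_ite_pair hpq]
          simp [hj', hjq']
    · by_cases hiq : i = q
      · by_cases hj : j = p
        · rw [hiq, hj]
          simp_rw [hcolq, hcolp]
          rw [sum_ite_pair hpq]
          simp [hpq, hqp]
          ring
        · by_cases hjq : j = q
          · rw [hiq, hjq]
            simp_rw [hcolq]
            rw [sum_ite_pair hpq]
            simp [hqp]
            nlinarith [hcs]
          · have hj' : p ≠ j := fun h => hj h.symm
            have hjq' : q ≠ j := fun h => hjq h.symm
            rw [hiq]
            simp_rw [hcolq, hcolo j hj hjq]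
            rw [sum_ite_pair hpq]
            simp [hj', hjq', hqp]
      · simp_rw [hcolo i hi hiq]
        rw [sum_ite_single]
        by_cases hj : j = p
        · rw [hj]
          rw [hcolp]
          simp [hi, hiq, fun h : i = p => hi h]
        · by_cases hjq : j = q
          · rw [hjq]
            rw [hcolq]
            simp [hi, hiq]
          · rw [hcolo j hj hjq]
            
  · rw [Matrix.mul_apply]
    simp only [Matrix.transpose_apply]
    simp_rw [hrowp, Matrix.mul_apply, hrowp]
    simp_rw [sum_ite_pair hpq]
    rw [sum_ite_pair' hpq]
    have hsymm : B q p = B p q := hB.apply p q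
    rw [← hθ]
    simp only [hg, hsymm]
    ring
end

lemma conj_isSymm {k : ℕ} (B R : Matrix (Fin k) (Fin k) ℝ) (hB : B.IsSymm) :
    (R * B * Rᵀ).IsSymm := by
  unfold Matrix.IsSymm
  rw [Matrix.transpose_mul, Matrix.transpose_mul, Matrix.transpose_transpose, hB.eq,
    Matrix.mul_assoc]

lemma conj_diag_sum {k : ℕ} (B R : Matrix (Fin k) (Fin k) ℝ) (hR : Rᵀ * R = 1) :
    ∑ j, (R * B * Rᵀ) j j = ∑ j, B j j := by
  have h1 : (R * B * Rᵀ).trace = B.trace := by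
    rw [Matrix.trace_mul_comm (R * B) Rᵀ, ← Matrix.mul_assoc, hR, Matrix.one_mul]
  simpa [Matrix.trace, Matrix.diag] using h1

lemma step_last {m : ℕ} (B : Matrix (Fin (m+1)) (Fin (m+1)) ℝ) (hB : B.IsSymm) :
    ∃ R : Matrix (Fin (m+1)) (Fin (m+1)) ℝ, Rᵀ * R = 1 ∧
      (R * B * Rᵀ) (Fin.last m) (Fin.last m) = (∑ j, B j j) / (m+1) := by
  set t : ℝ := (∑ j, B j j) / (m+1) with hts
  have hm1 : ((m:ℝ) + 1) ≠ 0 := by positivity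
  have hsum : ∑ j, B j j = (m+1 : ℝ) * t := by
    rw [hts]; field_simp
  rcases lt_trichotomy (B (Fin.last m) (Fin.last m)) t with h | h | h
  · have hq : ∃ q, t < B q q := by
      by_contra hall
      push_neg at hall
      have hlt : ∑ j, B j j < ∑ _j : Fin (m+1), t :=
        Finset.sum_lt_sum (fun i _ => hall i) ⟨Fin.last m, Finset.mem_univ _, h⟩
      rw [Finset.sum_const, Finset.card_univ, Fintype.card_fin, nsmul_eq_mul] at hlt
      rw [hsum] at hlt
      push_cast at hlt
      linarith
    obtain ⟨q, hq⟩ := hq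
    have hpq : Fin.last m ≠ q := by
      intro he; rw [← he] at hq; linarith
    exact rot_exists B hB (Fin.last m) q hpq t
      (Set.mem_uIcc.2 (Or.inl ⟨le_of_lt h, le_of_lt hq⟩))
  · exact ⟨1, by simp, by simpa using h⟩
  · have hq : ∃ q, B q q < t := by
      by_contra hall
      push_neg at hall
      have hlt : ∑ _j : Fin (m+1), t < ∑ j, B j j :=
        Finset.sum_lt_sum (fun i _ => hall i) ⟨Fin.last m, Finset.mem_univ _, h⟩
      rw [Finset.sum_const, Finset.card_univ, Fintype.card_fin, nsmul_eq_mul] at hlt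
      rw [hsum] at hlt
      push_cast at hlt
      linarith
    obtain ⟨q, hq⟩ := hq
    have hpq : Fin.last m ≠ q := by
      intro he; rw [← he] at hq; linarith
    exact rot_exists B hB (Fin.last m) q hpq t
      (Set.mem_uIcc.2 (Or.inr ⟨le_of_lt hq, le_of_lt h⟩))

lemma exists_orth_const_diag : ∀ (k : ℕ) (B : Matrix (Fin k) (Fin k) ℝ), B.IsSymm →
    ∃ Q : Matrix (Fin k) (Fin k) ℝ, Qᵀ * Q = 1 ∧
      ∀ i, (Q * B * Qᵀ) i i = (∑ j, B j j) / k := by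
  intro k
  induction k with
  | zero => exact fun B _ => ⟨1, by simp, fun i => i.elim0⟩
  | succ m ih =>
    intro B hB
    obtain ⟨R, hR1, hR2⟩ := step_last B hB
    set t : ℝ := (∑ j, B j j) / (m+1) with hts
    set B₁ := R * B * Rᵀ with hB₁
    have hB₁s : B₁.IsSymm := conj_isSymm B R hB
    have hB₁sum : ∑ j, B₁ j j = ∑ j, B j j := conj_diag_sum B R hR1
    set C : Matrix (Fin m) (Fin m) ℝ := B₁.submatrix Fin.castSucc Fin.castSucc with hC
    have hCs : C.IsSymm := by
      unfold Matrix.IsSymm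
      ext i j
      simp [hC, Matrix.submatrix_apply, ← Matrix.IsSymm.apply hB₁s]
    have hCsum : ∑ j, C j j = (m : ℝ) * t := by
      have hsplit : ∑ j, B₁ j j
          = ∑ j : Fin m, B₁ j.castSucc j.castSucc + B₁ (Fin.last m) (Fin.last m) :=
        Fin.sum_univ_castSucc (fun j => B₁ j j)
      have hm1 : ((m:ℝ) + 1) ≠ 0 := by positivity
      have hBsum : ∑ j, B j j = ((m:ℝ)+1) * t := by rw [hts]; push_cast; field_simp
      have h2 : ∑ j : Fin m, B₁ j.castSucc j.castSucc = (m:ℝ) * t := by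
        rw [hB₁sum, hR2, hBsum] at hsplit
        linarith
      simpa [hC] using h2
    obtain ⟨Q', hQ'1, hQ'2⟩ := ih C hCs
    have hCt : ∀ i : Fin m, (Q' * C * Q'ᵀ) i i = t := by
      intro i
      rcases Nat.eq_zero_or_pos m with hm | hm
      · subst hm; exact i.elim0
      · rw [hQ'2 i, hCsum]
        have hm0 : (m : ℝ) ≠ 0 := Nat.cast_ne_zero.2 (Nat.pos_iff_ne_zero.mp hm)
        field_simp
    -- extension of Q' to Fin (m+1)
    set E : Matrix (Fin (m+1)) (Fin (m+1)) ℝ := Matrix.of (fun i j =>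
        if hi : i = Fin.last m then (if j = Fin.last m then 1 else 0)
        else if hj : j = Fin.last m then 0 else Q' (i.castPred hi) (j.castPred hj)) with hE
    have hElast : ∀ j, E (Fin.last m) j = if j = Fin.last m then 1 else 0 := by
      intro j; simp [hE]
    have hEcs : ∀ (l : Fin m) (j) (hj : j ≠ Fin.last m),
        E l.castSucc j = Q' l (j.castPred hj) := by
      intro l j hj
      simp [hE, (Fin.castSucc_lt_last l).ne, hj]
    have hEcs' : ∀ (l : Fin m), E l.castSucc (Fin.last m) = 0 := by
      intro l; simp [hE, (Fin.castSucc_lt_last l).ne]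
    have hE1 : Eᵀ * E = 1 := by
      ext i j
      rw [Matrix.mul_apply]
      simp only [Matrix.transpose_apply, Matrix.one_apply]
      rw [Fin.sum_univ_castSucc (fun l => E l i * E l j)]
      by_cases hi : i = Fin.last m
      · by_cases hj : j = Fin.last m
        · rw [hi, hj]; simp [hElast, hEcs']
        · rw [hi, if_neg (show ¬ Fin.last m = j from fun h => hj h.symm)]
          simp [hElast, hEcs', hEcs _ _ hj, hj]
      · by_cases hj : j = Fin.last m
        · rw [hj, if_neg hi]
          simp [hElast, hEcs', hEcs _ _ hi, hi]
        · have hcol : (Q'ᵀ * Q') (i.castPred hi) (j.castPred hj)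
              = (1 : Matrix (Fin m) (Fin m) ℝ) (i.castPred hi) (j.castPred hj) := by
            rw [hQ'1]
          rw [Matrix.mul_apply] at hcol
          simp only [Matrix.transpose_apply, Matrix.one_apply] at hcol
          have hsum : ∑ l : Fin m, E l.castSucc i * E l.castSucc j
              = ∑ l : Fin m, Q' l (i.castPred hi) * Q' l (j.castPred hj) :=
            Finset.sum_congr rfl (fun l _ => by rw [hEcs _ _ hi, hEcs _ _ hj])
          rw [hsum, hcol, hElast, if_neg hi]
          simp [Fin.castPred_inj]
    have hErow : ∀ (i : Fin (m+1)) (hi : i ≠ Fin.last m) (l : Fin m),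
        E i l.castSucc = Q' (i.castPred hi) l := by
      intro i hi l
      conv_lhs => rw [← Fin.castSucc_castPred i hi]
      rw [hEcs _ _ (Fin.castSucc_lt_last l).ne]
      simp
    have hErow0 : ∀ (i : Fin (m+1)) (hi : i ≠ Fin.last m), E i (Fin.last m) = 0 := by
      intro i hi
      conv_lhs => rw [← Fin.castSucc_castPred i hi]
      rw [hEcs']
    have hEdiag : ∀ i, (E * B₁ * Eᵀ) i i = t := by
      intro i
      rw [Matrix.mul_apply]
      simp only [Matrix.transpose_apply]
      simp_rw [Matrix.mul_apply]
      by_cases hi : i = Fin.last m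
      · rw [hi]
        have h1 : ∀ l', (∑ l, E (Fin.last m) l * B₁ l l') * E (Fin.last m) l'
            = (if l' = Fin.last m then B₁ (Fin.last m) (Fin.last m) else 0) := by
          intro l'
          simp_rw [hElast]
          rw [Finset.sum_congr rfl (fun l _ => by rw [ite_mul, one_mul, zero_mul]),
            Finset.sum_ite_eq' Finset.univ]
          by_cases hl' : l' = Fin.last m <;> simp [hl']
        rw [Finset.sum_congr rfl (fun l' _ => h1 l'), Finset.sum_ite_eq' Finset.univ]
        simp [hR2]
      · set i' := i.castPred hi with hi'
        have hinner : ∀ l', (∑ l, E i l * B₁ l l') = ∑ l : Fin m, Q' i' l * B₁ l.castSucc l' := by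
          intro l'
          rw [Fin.sum_univ_castSucc (fun l => E i l * B₁ l l'), hErow0 i hi]
          simp only [hErow i hi, zero_mul, add_zero, hi']
        rw [Finset.sum_congr rfl (fun l' _ => by rw [hinner l'])]
        rw [Fin.sum_univ_castSucc (fun l' => (∑ l : Fin m, Q' i' l * B₁ l.castSucc l') * E i l'),
          hErow0 i hi]
        simp only [hErow i hi, mul_zero, add_zero, hi']
        have hct := hCt i'
        rw [Matrix.mul_apply] at hct
        simp_rw [Matrix.mul_apply, Matrix.transpose_apply] at hct
        simpa [hC, Matrix.submatrix_apply] using hct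
    refine ⟨E * R, ?_, ?_⟩
    · rw [Matrix.transpose_mul, Matrix.mul_assoc, ← Matrix.mul_assoc Eᵀ, hE1,
        Matrix.one_mul, hR1]
    · intro i
      have hconj : E * R * B * (E * R)ᵀ = E * B₁ * Eᵀ := by
        rw [Matrix.transpose_mul, hB₁]
        simp only [Matrix.mul_assoc]
      rw [hconj, hEdiag i, hts]
      push_cast
      ring

lemma exists_orth_diag (k : ℕ) (w : Fin k → ℝ) :
    ∃ Q : Matrix (Fin k) (Fin k) ℝ, Qᵀ * Q = 1 ∧
      ∀ i, ∑ j, w j * Q i j ^ 2 = (∑ j, w j) / k := by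
  obtain ⟨Q, h1, h2⟩ := exists_orth_const_diag k (Matrix.diagonal w) (Matrix.isSymm_diagonal w)
  refine ⟨Q, h1, fun i => ?_⟩
  have h := h2 i
  rw [Matrix.mul_apply] at h
  simp only [Matrix.transpose_apply, Matrix.mul_diagonal, Matrix.diagonal_apply_eq] at h
  calc ∑ j, w j * Q i j ^ 2 = ∑ j, Q i j * w j * Q i j := by
        apply Finset.sum_congr rfl; intro j _; ring
    _ = (∑ j, w j) / k := h

lemma sum_extend {n k : ℕ} (hnk : n ≤ k) (f : Fin k → ℝ)
    (hf : ∀ l : Fin k, n ≤ (l : ℕ) → f l = 0) :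
    ∑ l, f l = ∑ j : Fin n, f (Fin.castLE hnk j) := by
  classical
  set F : ℕ → ℝ := fun l => if h : l < k then f ⟨l, h⟩ else 0 with hF
  have h1 : ∑ l, f l = ∑ l ∈ Finset.range k, F l := by
    rw [Finset.sum_range fun l => F l]
    apply Finset.sum_congr rfl
    intro l _
    simp [hF, l.isLt]
  have h2 : ∑ j : Fin n, f (Fin.castLE hnk j) = ∑ l ∈ Finset.range n, F l := by
    rw [Finset.sum_range fun l => F l]
    apply Finset.sum_congr rfl
    intro l _
    simp only [hF, l.isLt, lt_of_lt_of_le l.isLt hnk, dif_pos]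
    rfl
  rw [h1, h2]
  rw [Finset.sum_subset (Finset.range_subset_range.2 hnk)]
  intro x hx hxn
  rw [Finset.mem_range] at hx
  rw [Finset.mem_range, not_lt] at hxn
  simp only [hF, hx, dif_pos]
  exact hf ⟨x, hx⟩ hxn

/-- For `n ≤ k` and nonnegative `a` with `∑ aⱼ > 0`, the (possibly
degenerate) ellipsoid `{x : ∑ aⱼ xⱼ² = 1}` in ℝⁿ contains a tight frame of `k` vectors. -/
theorem ellipsoid_contains_tight_frame_of_length
    (n k : ℕ) (hn : 1 ≤ n) (hnk : n ≤ k) (a : Fin n → ℝ) (ha : ∀ j, 0 ≤ a j)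
    (hr : 0 < ∑ j, a j) :
    ∃ u : Fin k → EuclideanSpace ℝ (Fin n),
      (∀ i, ∑ j, a j * (u i j) ^ 2 = 1) ∧
      ∃ K : ℝ, 0 < K ∧
        ∀ x : EuclideanSpace ℝ (Fin n),
          ∑ i, (inner ℝ x (u i) : ℝ) ^ 2 = K * ‖x‖ ^ 2 := by
  classical
  set r : ℝ := ∑ j, a j with hrdef
  have hk1 : 1 ≤ k := le_trans hn hnk
  have hk0 : (0:ℝ) < (k:ℝ) := by exact_mod_cast lt_of_lt_of_le one_pos (by exact_mod_cast hk1)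
  have hkr : (0:ℝ) < (k:ℝ) / r := div_pos hk0 hr
  set w : Fin k → ℝ := fun l => if h : (l : ℕ) < n then a ⟨l, h⟩ else 0 with hw
  have hw0 : ∀ l : Fin k, n ≤ (l : ℕ) → w l = 0 := by
    intro l hl; simp [hw, not_lt.2 hl]
  have hwcast : ∀ j : Fin n, w (Fin.castLE hnk j) = a j := by
    intro j
    simp [hw, j.isLt]
  have hwsum : ∑ l, w l = r := by
    rw [sum_extend hnk w hw0]
    rw [hrdef]
    exact Finset.sum_congr rfl (fun j _ => hwcast j)
  obtain ⟨Q, hQ1, hQ2⟩ := exists_orth_diag k w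
  set u : Fin k → EuclideanSpace ℝ (Fin n) := fun i =>
    (WithLp.equiv 2 (Fin n → ℝ)).symm (fun j => Real.sqrt ((k:ℝ)/r) * Q i (Fin.castLE hnk j))
    with hu
  have huapp : ∀ i j, u i j = Real.sqrt ((k:ℝ)/r) * Q i (Fin.castLE hnk j) := by
    intro i j; simp [hu]
  have hsq : Real.sqrt ((k:ℝ)/r) * Real.sqrt ((k:ℝ)/r) = (k:ℝ)/r :=
    Real.mul_self_sqrt (le_of_lt hkr)
  refine ⟨u, ?_, (k:ℝ)/r, hkr, ?_⟩
  · intro i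
    have h1 : ∑ j : Fin n, a j * (u i j) ^ 2
        = ((k:ℝ)/r) * ∑ j : Fin n, a j * Q i (Fin.castLE hnk j) ^ 2 := by
      rw [Finset.mul_sum]
      apply Finset.sum_congr rfl
      intro j _
      rw [huapp, mul_pow, pow_two (Real.sqrt ((k:ℝ)/r)), hsq]
      ring
    have h2 : ∑ j : Fin n, a j * Q i (Fin.castLE hnk j) ^ 2 = r / k := by
      have := sum_extend hnk (fun l => w l * Q i l ^ 2)
        (fun l hl => by show w l * Q i l ^ 2 = 0; rw [hw0 l hl, zero_mul])
      rw [← hwsum]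
      rw [Finset.sum_congr rfl (fun j (_ : j ∈ Finset.univ) => by rw [← hwcast j])]
      rw [← this, hQ2 i, hwsum]
    rw [h1, h2]
    field_simp
  · intro x
    have hinner : ∀ i, (inner ℝ x (u i) : ℝ) = ∑ j, x j * u i j := by
      intro i
      rw [PiLp.inner_apply]
      apply Finset.sum_congr rfl
      intro j _
      simp [RCLike.inner_apply, conj_trivial, mul_comm]
    have hcols : ∀ j j' : Fin n, ∑ i, u i j * u i j'
        = ((k:ℝ)/r) * (if j = j' then 1 else 0) := by
      intro j j'
      have hcol : ∑ i, Q i (Fin.castLE hnk j) * Q i (Fin.castLE hnk j')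
          = (1 : Matrix (Fin k) (Fin k) ℝ) (Fin.castLE hnk j) (Fin.castLE hnk j') := by
        have h2 : (Qᵀ * Q) (Fin.castLE hnk j) (Fin.castLE hnk j')
            = (1 : Matrix (Fin k) (Fin k) ℝ) (Fin.castLE hnk j) (Fin.castLE hnk j') := by
          rw [hQ1]
        rw [Matrix.mul_apply] at h2
        simp only [Matrix.transpose_apply] at h2
        exact h2
      calc ∑ i, u i j * u i j'
          = ((k:ℝ)/r) * ∑ i, Q i (Fin.castLE hnk j) * Q i (Fin.castLE hnk j') := by
            rw [Finset.mul_sum]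
            apply Finset.sum_congr rfl
            intro i _
            rw [huapp, huapp]
            linear_combination (Q i (Fin.castLE hnk j) * Q i (Fin.castLE hnk j')) * hsq
        _ = ((k:ℝ)/r) * (if j = j' then 1 else 0) := by
            rw [hcol, Matrix.one_apply]
            congr 1
            simp [Fin.castLE_inj]
    have hnorm : ‖x‖ ^ 2 = ∑ j, x j ^ 2 := by
      rw [EuclideanSpace.norm_eq, Real.sq_sqrt (by positivity)]
      apply Finset.sum_congr rfl
      intro j _
      rw [Real.norm_eq_abs, sq_abs]
    calc ∑ i, (inner ℝ x (u i) : ℝ) ^ 2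
        = ∑ i, ∑ j, ∑ j', (x j * u i j) * (x j' * u i j') := by
          apply Finset.sum_congr rfl
          intro i _
          rw [hinner i, pow_two, Finset.sum_mul_sum]
      _ = ∑ j, ∑ j', (x j * x j') * ∑ i, u i j * u i j' := by
          rw [Finset.sum_comm]
          apply Finset.sum_congr rfl
          intro j _
          rw [Finset.sum_comm]
          apply Finset.sum_congr rfl
          intro j' _
          rw [Finset.mul_sum]
          apply Finset.sum_congr rfl
          intro i _
          ring
      _ = ((k:ℝ)/r) * ‖x‖ ^ 2 := by
          simp_rw [hcols, mul_ite, mul_one, mul_zero, Finset.sum_ite_eq, Finset.mem_univ,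
            if_true]
          rw [hnorm, Finset.mul_sum]
          apply Finset.sum_congr rfl
          intro j _
          ring
end

section
/- Let A be a positive bounded operator on a Hilbert space that admits a projection decomposition, i.e., A = ∑_i P_i with each P_i a self-adjoint projection and convergence in the strong operator topology. Then either A is itself a projection or ‖A‖ > 1. -/
/-- A positive operator admitting a projection decomposition (a strongly
convergent sum of self-adjoint projections) is either itself a projection or has
norm `> 1`. -/
theorem projection_or_norm_gt_one_of_projection_decomposition
    {𝕜 H : Type*} [RCLike 𝕜] [NormedAddCommGroup H] [InnerProductSpace 𝕜 H]
    [CompleteSpace H] [TopologicalSpace.SeparableSpace H]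
    (A : H →L[𝕜] H) (hA : A.IsPositive)
    {ι : Type*} [Countable ι] (P : ι → (H →L[𝕜] H))
    (hproj : ∀ i, IsSelfAdjoint (P i) ∧ (P i) ∘L (P i) = P i)
    (hsum : ∀ x : H, HasSum (fun i => P i x) (A x)) :
    (IsSelfAdjoint A ∧ A ∘L A = A) ∨ 1 < ‖A‖ := by
  rcases le_or_gt ‖A‖ 1 with hle | hgt
  · left
    -- each term ⟪x, P j x⟫ has real part ‖P j x‖²
    have hterm : ∀ (j : ι) (x : H),
        RCLike.re (inner 𝕜 x (P j x) : 𝕜) = ‖P j x‖ ^ 2 := by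
      intro j x
      have h1 : P j (P j x) = P j x := congrFun (congrArg DFunLike.coe (hproj j).2) x
      have h2 : (inner 𝕜 (P j x) (P j x) : 𝕜) = (inner 𝕜 x (P j x) : 𝕜) := by
        have h3 := (hproj j).1.isSymmetric x (P j x)
        simp only [ContinuousLinearMap.coe_coe] at h3
        rw [h1] at h3
        exact h3
      rw [← h2]
      exact inner_self_eq_norm_sq (𝕜 := 𝕜) (P j x)
    have key : ∀ (i : ι) (u : H), A (P i u) = P i u := by
      intro i u
      set x := P i u with hx
      have hPx : P i x = x := congrFun (congrArg DFunLike.coe (hproj i).2) u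
      have h1 : HasSum (fun j => RCLike.re (inner 𝕜 x (P j x) : 𝕜))
          (RCLike.re (inner 𝕜 x (A x) : 𝕜)) := by
        have := ((hsum x).mapL (innerSL 𝕜 x)).mapL RCLike.reCLM
        simpa using this
      have hlow : ‖x‖ ^ 2 ≤ RCLike.re (inner 𝕜 x (A x) : 𝕜) := by
        have := le_hasSum h1 i (fun j _ => by rw [hterm]; positivity)
        rwa [hterm, hPx] at this
      have hAx : ‖A x‖ ≤ ‖x‖ := by
        calc ‖A x‖ ≤ ‖A‖ * ‖x‖ := A.le_opNorm x
        _ ≤ 1 * ‖x‖ := by nlinarith [norm_nonneg x]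
        _ = ‖x‖ := one_mul _
      have hup : RCLike.re (inner 𝕜 x (A x) : 𝕜) ≤ ‖x‖ ^ 2 := by
        calc RCLike.re (inner 𝕜 x (A x) : 𝕜) ≤ ‖(inner 𝕜 x (A x) : 𝕜)‖ := RCLike.re_le_norm _
        _ ≤ ‖x‖ * ‖A x‖ := norm_inner_le_norm _ _
        _ ≤ ‖x‖ * ‖x‖ := by nlinarith [norm_nonneg x]
        _ = ‖x‖ ^ 2 := (sq ‖x‖).symm
      have heq : RCLike.re (inner 𝕜 x (A x) : 𝕜) = ‖x‖ ^ 2 := le_antisymm hup hlow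
      have hre : RCLike.re (inner 𝕜 (A x) x : 𝕜) = ‖x‖ ^ 2 := by
        rw [← heq, ← inner_conj_symm x (A x), RCLike.conj_re]
      have hz : ‖A x - x‖ ^ 2 ≤ 0 := by
        have := @norm_sub_sq 𝕜 H _ _ _ (A x) x
        nlinarith [norm_nonneg (A x), norm_nonneg x]
      have : A x - x = 0 := by
        have h0 : ‖A x - x‖ = 0 := by nlinarith [norm_nonneg (A x - x)]
        exact norm_eq_zero.mp h0
      exact sub_eq_zero.mp this
    refine ⟨hA.isSelfAdjoint, ?_⟩
    ext x
    have h1 : HasSum (fun j => P j x) (A (A x)) := by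
      have := (hsum x).mapL A
      simpa [key] using this
    exact (h1.unique (hsum x))
  · exact Or.inr hgt
end

section
/- Let A = ∑_i P_i be a positive operator written as a strongly convergent sum of self-adjoint projections, with ‖A‖ ≤ 1. Then the projections are mutually orthogonal: P_i P_j = 0 for all i ≠ j. -/
open RCLike ContinuousLinearMap

local notation "⟪" x ", " y "⟫" => @inner _ _ _ x y

private lemma aux_pos_inner_zero {𝕜 H : Type*} [RCLike 𝕜] [NormedAddCommGroup H]
    [InnerProductSpace 𝕜 H] [CompleteSpace H]
    {T : H →L[𝕜] H} (hT : T.IsPositive) {x : H}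
    (hx : RCLike.re (inner 𝕜 (T x) x : 𝕜) = 0) : T x = 0 := by
  have hsym : T.IsSymmetric := hT.1
  set N : ℝ := ‖T x‖ ^ 2 with hN
  set C : ℝ := RCLike.re (inner 𝕜 (T (T x)) (T x) : 𝕜) with hC
  have hC0 : 0 ≤ C := hT.2 (T x)
  have hN0 : 0 ≤ N := by positivity
  have key : ∀ t : ℝ, 0 ≤ 2 * t * N + t ^ 2 * C := by
    intro t
    have h0 := hT.2 (x + (t : 𝕜) • T x)
    have hsymTx : (inner 𝕜 (T (T x)) x : 𝕜) = inner 𝕜 (T x) (T x) := hsym (T x) x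
    have hreTx : RCLike.re (inner 𝕜 (T x) (T x) : 𝕜) = N := by
      simp [hN, inner_self_eq_norm_sq]
    simp only [ContinuousLinearMap.reApplyInnerSelf, map_add, map_smul, inner_add_left,
      inner_add_right, inner_smul_left, inner_smul_right, hsymTx, map_mul, RCLike.conj_ofReal,
      map_ofNat, RCLike.ofReal_re, RCLike.ofReal_im, mul_re] at h0
    have him : RCLike.im (inner 𝕜 (T x) (T x) : 𝕜) = 0 := by
      rw [inner_self_eq_norm_sq_to_K, ← RCLike.ofReal_pow, RCLike.ofReal_im]
    calc (0:ℝ) ≤ _ := h0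
    _ = 2 * t * N + t ^ 2 * C := by
      rw [hreTx] at *
      nlinarith [hx, him, hreTx]
  have h2N : 2 * N ≤ 0 := by
    apply le_of_forall_pos_le_add
    intro ε hε
    have hC1 : (0:ℝ) < C + 1 := by linarith
    set d : ℝ := ε / (C + 1) with hddef
    have ht := key (-d)
    have hd : 0 < d := by positivity
    have h1 : d * (2 * N) ≤ d * (d * C) := by nlinarith [ht]
    have h2 : 2 * N ≤ d * C := le_of_mul_le_mul_left h1 hd
    have h3 : d * C ≤ ε := by
      have h4 : C / (C + 1) ≤ 1 := div_le_one_of_le₀ (by linarith) hC1.le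
      calc d * C = ε * (C / (C + 1)) := by rw [hddef]; ring
      _ ≤ ε * 1 := by nlinarith
      _ = ε := mul_one ε
    linarith
  have : N = 0 := le_antisymm (by linarith) hN0
  have : ‖T x‖ = 0 := by
    have := this
    rw [hN] at this
    nlinarith [norm_nonneg (T x)]
  simpa using this

/-- If a positive operator `A` with `‖A‖ ≤ 1` is a strongly convergent sum
of self-adjoint projections, then those projections are mutually orthogonal. -/
theorem projections_mutually_orthogonal_of_sum_norm_le_one
    {𝕜 H : Type*} [RCLike 𝕜] [NormedAddCommGroup H] [InnerProductSpace 𝕜 H]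
    [CompleteSpace H] [TopologicalSpace.SeparableSpace H]
    (A : H →L[𝕜] H) (hA : A.IsPositive) (hnorm : ‖A‖ ≤ 1)
    {ι : Type*} [Countable ι] (P : ι → (H →L[𝕜] H))
    (hproj : ∀ i, IsSelfAdjoint (P i) ∧ (P i) ∘L (P i) = P i)
    (hsum : ∀ x : H, HasSum (fun i => P i x) (A x)) :
    ∀ i j, i ≠ j → (P i) ∘L (P j) = 0 := by
  classical
  have hsymP : ∀ j, (P j).IsSymmetric := fun j =>
    (ContinuousLinearMap.isSelfAdjoint_iff_isSymmetric).mp (hproj j).1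
  have hidem : ∀ j (x : H), P j (P j x) = P j x := by
    intro j x
    have := congrArg (fun T : H →L[𝕜] H => T x) (hproj j).2
    simpa using this
  -- re ⟪x, P j x⟫ = ‖P j x‖²
  have hsq : ∀ (j : ι) (x : H), RCLike.re (inner 𝕜 x (P j x) : 𝕜) = ‖P j x‖ ^ 2 := by
    intro j x
    have h1 : (inner 𝕜 x (P j x) : 𝕜) = inner 𝕜 (P j x) (P j x) := by
      conv_lhs => rw [← hidem j x]
      exact (hsymP j x (P j x)).symm
    rw [h1]
    exact inner_self_eq_norm_sq _
  -- the sum of ‖P j x‖² converges to re ⟪x, A x⟫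
  have hS : ∀ x : H, HasSum (fun j => (‖P j x‖ ^ 2 : ℝ)) (RCLike.re (inner 𝕜 x (A x) : 𝕜)) := by
    intro x
    have h1 : HasSum (fun j => (inner 𝕜 x (P j x) : 𝕜)) (inner 𝕜 x (A x) : 𝕜) :=
      (hsum x).mapL (innerSL 𝕜 x)
    have h2 := h1.mapL (RCLike.reCLM (K := 𝕜))
    simpa [hsq] using h2
  -- key claim: for every i, y, and j ≠ i, P j (P i y) = 0
  have key : ∀ (i : ι) (y : H) (j : ι), j ≠ i → P j (P i y) = 0 := by
    intro i y j hji
    set x : H := P i y with hxdef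
    have hx : P i x = x := hidem i y
    -- re ⟪x, A x⟫ ≤ ‖x‖²
    have hup : RCLike.re (inner 𝕜 x (A x) : 𝕜) ≤ ‖x‖ ^ 2 := by
      calc RCLike.re (inner 𝕜 x (A x) : 𝕜) ≤ ‖x‖ * ‖A x‖ := re_inner_le_norm x (A x)
      _ ≤ ‖x‖ * (‖A‖ * ‖x‖) := by
          have := A.le_opNorm x
          nlinarith [norm_nonneg x]
      _ ≤ ‖x‖ ^ 2 := by nlinarith [norm_nonneg x, norm_nonneg (A x), opNorm_nonneg A]
    -- re ⟪x, A x⟫ ≥ ‖x‖² via the term at i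
    have hlow : ‖x‖ ^ 2 ≤ RCLike.re (inner 𝕜 x (A x) : 𝕜) := by
      have := le_hasSum (hS x) i (fun j _ => by positivity)
      rwa [hx] at this
    have heq : RCLike.re (inner 𝕜 x (A x) : 𝕜) = ‖x‖ ^ 2 := le_antisymm hup hlow
    -- 1 - A is positive and kills x
    have hone : (1 - A : H →L[𝕜] H).IsPositive := by
      constructor
      · exact (ContinuousLinearMap.isSelfAdjoint_iff_isSymmetric).mp ((IsSelfAdjoint.one (H →L[𝕜] H)).sub hA.isSelfAdjoint)
      · intro z
        have h1 : RCLike.re (inner 𝕜 ((1 - A : H →L[𝕜] H) z) z : 𝕜)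
            = ‖z‖ ^ 2 - RCLike.re (inner 𝕜 (A z) z : 𝕜) := by
          simp [inner_sub_left, inner_self_eq_norm_sq]
        have h2 : RCLike.re (inner 𝕜 (A z) z : 𝕜) ≤ ‖z‖ ^ 2 := by
          calc RCLike.re (inner 𝕜 (A z) z : 𝕜) ≤ ‖A z‖ * ‖z‖ := re_inner_le_norm _ _
          _ ≤ ‖A‖ * ‖z‖ * ‖z‖ := by nlinarith [A.le_opNorm z, norm_nonneg z]
          _ ≤ ‖z‖ ^ 2 := by nlinarith [norm_nonneg z, norm_nonneg (A z), opNorm_nonneg A]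
        rw [ContinuousLinearMap.reApplyInnerSelf, h1]
        linarith
    have hAx : A x = x := by
      have hz : RCLike.re (inner 𝕜 ((1 - A : H →L[𝕜] H) x) x : 𝕜) = 0 := by
        have hcomm : RCLike.re (inner 𝕜 (A x) x : 𝕜) = RCLike.re (inner 𝕜 x (A x) : 𝕜) :=
          inner_re_symm _ _
        simp [inner_sub_left, inner_self_eq_norm_sq, hcomm, heq]
      have := aux_pos_inner_zero hone hz
      have h0 : x - A x = 0 := by simpa [sub_eq_zero] using this
      have := sub_eq_zero.mp h0
      exact this.symm
    -- now the sum of ‖P j x‖² is ‖x‖², with term i already ‖x‖²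
    have hsum2 : HasSum (fun j => (‖P j x‖ ^ 2 : ℝ)) (‖x‖ ^ 2) := heq ▸ hS x
    have hterm : ‖P j x‖ ^ 2 = 0 := by
      have hfin := sum_le_hasSum ({i, j} : Finset ι) (fun k _ => by positivity) hsum2
      rw [Finset.sum_insert (by simpa using (Ne.symm hji)), Finset.sum_singleton, hx] at hfin
      nlinarith [sq_nonneg ‖P j x‖]
    have : ‖P j x‖ = 0 := by nlinarith [norm_nonneg (P j x)]
    simpa using this
  intro i j hij
  ext y
  simpa using key j y i hij
end

section
/- For every n × n real symmetric matrix B there exists an orthonormal basis u_1,...,u_n of ℝ^n such that ⟨B u_i, u_i⟩ = trace(B)/n for every i. -/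
open scoped RealInnerProductSpace
open Module

universe u

variable {E : Type u} [NormedAddCommGroup E] [InnerProductSpace ℝ E]

lemma trace_eq_sum_inner_ob [FiniteDimensional ℝ E] {ι : Type*} [Fintype ι] [DecidableEq ι]
    (b : OrthonormalBasis ι ℝ E) (T : E →ₗ[ℝ] E) :
    LinearMap.trace ℝ E T = ∑ i, ⟪T (b i), b i⟫ := by
  rw [LinearMap.trace_eq_matrix_trace ℝ b.toBasis, Matrix.trace]
  congr 1; ext i
  rw [Matrix.diag_apply, LinearMap.toMatrix_apply, OrthonormalBasis.coe_toBasis,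
    b.coe_toBasis_repr_apply, b.repr_apply_apply, real_inner_comm]

lemma exists_unit_inner_eq_avg' [FiniteDimensional ℝ E] (hn : 0 < finrank ℝ E)
    (T : E →ₗ[ℝ] E) (c : ℝ)
    (hc : ∃ b : Fin (finrank ℝ E) → E, Orthonormal ℝ b ∧
      (∃ i, ⟪T (b i), b i⟫ ≤ c) ∧ (∃ i, c ≤ ⟪T (b i), b i⟫)) :
    ∃ u : E, ‖u‖ = 1 ∧ ⟪T u, u⟫ = c := by
  obtain ⟨b, hb, ⟨i₁, hi₁⟩, ⟨i₂, hi₂⟩⟩ := hc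
  have hf : Continuous fun x : E => ⟪T x, x⟫ :=
    (T.continuous_of_finiteDimensional.inner continuous_id)
  by_cases h1 : finrank ℝ E = 1
  · have : i₁ = i₂ := by omega
    subst this
    exact ⟨b i₁, hb.1 i₁, le_antisymm hi₁ hi₂⟩
  · have hrank : 1 < Module.rank ℝ E := by
      rw [← finrank_eq_rank]
      exact_mod_cast lt_of_le_of_ne hn (fun h => h1 h.symm)
    have hS : IsConnected (Metric.sphere (0 : E) 1) :=
      isConnected_sphere hrank 0 zero_le_one
    have himg : IsPreconnected ((fun x : E => ⟪T x, x⟫) '' Metric.sphere 0 1) :=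
      hS.isPreconnected.image _ hf.continuousOn
    have hmem : ∀ i, ⟪T (b i), b i⟫ ∈ (fun x : E => ⟪T x, x⟫) '' Metric.sphere 0 1 :=
      fun i => ⟨b i, by simp [hb.1 i], rfl⟩
    obtain ⟨u, hu, hqu⟩ := himg.ordConnected.out (hmem i₁) (hmem i₂) ⟨hi₁, hi₂⟩
    exact ⟨u, by simpa using hu, hqu⟩

lemma exists_unit_inner_eq_avg [FiniteDimensional ℝ E] (hn : 0 < finrank ℝ E)
    (T : E →ₗ[ℝ] E) :
    ∃ u : E, ‖u‖ = 1 ∧ ⟪T u, u⟫ = LinearMap.trace ℝ E T / finrank ℝ E := by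
  apply exists_unit_inner_eq_avg' hn T
  set N := finrank ℝ E
  let b := stdOrthonormalBasis ℝ E
  refine ⟨b, b.orthonormal, ?_, ?_⟩
  · obtain ⟨i, -, hi⟩ := Finset.exists_le_of_sum_le (s := (Finset.univ : Finset (Fin N)))
      (f := fun i => ⟪T (b i), b i⟫) (g := fun _ => LinearMap.trace ℝ E T / N)
      ⟨⟨0, hn⟩, Finset.mem_univ _⟩
      (by
        rw [← trace_eq_sum_inner_ob b T, Finset.sum_const, Finset.card_univ, Fintype.card_fin,
          nsmul_eq_mul]
        field_simp
        exact le_rfl)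
    exact ⟨i, hi⟩
  · obtain ⟨i, -, hi⟩ := Finset.exists_le_of_sum_le (s := (Finset.univ : Finset (Fin N)))
      (g := fun i => ⟪T (b i), b i⟫) (f := fun _ => LinearMap.trace ℝ E T / N)
      ⟨⟨0, hn⟩, Finset.mem_univ _⟩
      (by
        rw [← trace_eq_sum_inner_ob b T, Finset.sum_const, Finset.card_univ, Fintype.card_fin,
          nsmul_eq_mul]
        field_simp
        exact (mul_comm _ _).le)
    exact ⟨i, hi⟩

lemma orthonormal_cons_orth {u₀ : E} (hu : ‖u₀‖ = 1) {m : ℕ}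
    (v : Fin m → (ℝ ∙ u₀)ᗮ) (hv : Orthonormal ℝ v) :
    Orthonormal ℝ (Fin.cons u₀ (fun j => ((v j : E))) : Fin (m + 1) → E) := by
  rw [orthonormal_iff_ite]
  have hmem : ∀ j, ((v j : E)) ∈ (ℝ ∙ u₀)ᗮ := fun j => (v j).2
  have horth : ∀ j, ⟪u₀, (v j : E)⟫ = 0 := fun j =>
    ((Submodule.mem_orthogonal _ _).mp (hmem j) u₀ (Submodule.mem_span_singleton_self u₀))
  intro i j
  induction i using Fin.cases with
  | zero =>
    induction j using Fin.cases with
    | zero => simp [real_inner_self_eq_norm_sq, hu]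
    | succ j => simpa [(Fin.succ_ne_zero j).symm] using horth j
  | succ i =>
    induction j using Fin.cases with
    | zero =>
      simp only [Fin.cons_succ, Fin.cons_zero]
      rw [real_inner_comm]
      simpa using horth i
    | succ j =>
      simp only [Fin.cons_succ]
      rw [← Submodule.coe_inner, orthonormal_iff_ite.mp hv i j]
      simp [Fin.succ_inj]

theorem aux_equal_diag : ∀ (N : ℕ) {E : Type u} [NormedAddCommGroup E]
    [InnerProductSpace ℝ E] [FiniteDimensional ℝ E] (T : E →ₗ[ℝ] E),
    T.IsSymmetric → finrank ℝ E = N →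
    ∃ u : Fin N → E, Orthonormal ℝ u ∧ Submodule.span ℝ (Set.range u) = ⊤ ∧
      ∀ i, ⟪T (u i), u i⟫ = LinearMap.trace ℝ E T / N := by
  intro N
  induction N using Nat.strong_induction_on with
  | _ N ih =>
  intro E _ _ _ T hT hE
  rcases N with _ | m
  · -- zero-dimensional case
    refine ⟨Fin.elim0, ⟨fun i => i.elim0, fun i => i.elim0⟩, ?_, fun i => i.elim0⟩
    have hsub : Subsingleton E := finrank_zero_iff.mp hE
    refine eq_top_iff.2 (fun x _ => ?_)
    rw [Subsingleton.elim x 0]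
    exact Submodule.zero_mem _
  · have hpos : 0 < finrank ℝ E := by omega
    obtain ⟨u₀, hu₀n, hu₀q⟩ := exists_unit_inner_eq_avg hpos T
    rw [hE] at hu₀q
    have hu₀ne : u₀ ≠ 0 := by
      intro h; rw [h, norm_zero] at hu₀n; exact one_ne_zero hu₀n.symm
    set K := (ℝ ∙ u₀)ᗮ with hKdef
    haveI : Fact (finrank ℝ E = m + 1) := ⟨hE⟩
    have hK : finrank ℝ K = m := Submodule.finrank_orthogonal_span_singleton hu₀ne
    set T' : K →ₗ[ℝ] K :=
      ((K.orthogonalProjectionOnto : E →L[ℝ] K) : E →ₗ[ℝ] K).comp (T.comp K.subtype) with hT'def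
    have hinner : ∀ (x y : K), ⟪T' x, y⟫ = ⟪T (x : E), (y : E)⟫ := by
      intro x y
      show ⟪K.orthogonalProjectionOnto (T (x : E)), y⟫ = _
      rw [Submodule.inner_orthogonalProjectionOnto_eq_of_mem_right]
    have hT' : T'.IsSymmetric := by
      intro x y
      rw [hinner, real_inner_comm (T' y) x, hinner, hT (x : E) (y : E)]
      exact real_inner_comm _ _
    -- compare traces
    let cK : OrthonormalBasis (Fin m) ℝ K := (stdOrthonormalBasis ℝ K).reindex (finCongr hK)
    let w : Fin (m + 1) → E := Fin.cons u₀ (fun j => ((cK j : E)))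
    have hw_on : Orthonormal ℝ w := orthonormal_cons_orth hu₀n _ cK.orthonormal
    have hw_sp : Submodule.span ℝ (Set.range w) = ⊤ :=
      hw_on.linearIndependent.span_eq_top_of_card_eq_finrank (by simp [hE])
    let bW : OrthonormalBasis (Fin (m + 1)) ℝ E := OrthonormalBasis.mk hw_on hw_sp.ge
    have htr : LinearMap.trace ℝ E T
        = ⟪T u₀, u₀⟫ + ∑ j : Fin m, ⟪T ((cK j : E)), ((cK j : E))⟫ := by
      rw [trace_eq_sum_inner_ob bW T]
      have hbW : ∀ i, bW i = w i := fun i => OrthonormalBasis.coe_mk hw_on hw_sp.ge ▸ rfl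
      simp only [hbW]
      rw [Fin.sum_univ_succ]
      simp [w]
    have htrK : LinearMap.trace ℝ K T'
        = ∑ j : Fin m, ⟪T ((cK j : E)), ((cK j : E))⟫ := by
      rw [trace_eq_sum_inner_ob cK T']
      exact Finset.sum_congr rfl fun j _ => hinner _ _
    have htrK' : LinearMap.trace ℝ K T'
        = LinearMap.trace ℝ E T - LinearMap.trace ℝ E T / (m + 1 : ℕ) := by
      have h := htr
      rw [hu₀q] at h
      rw [htrK]
      linarith
    obtain ⟨v, hv_on, hv_sp, hv_q⟩ := ih m (Nat.lt_succ_self m) T' hT' hK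
    refine ⟨Fin.cons u₀ (fun j => ((v j : E))), orthonormal_cons_orth hu₀n _ hv_on, ?_, ?_⟩
    · exact (orthonormal_cons_orth hu₀n _ hv_on).linearIndependent.span_eq_top_of_card_eq_finrank
        (by simp [hE])
    · intro i
      induction i using Fin.cases with
      | zero => simpa using hu₀q
      | succ j =>
        have hm : 0 < m := j.pos
        have hmR : (m : ℝ) ≠ 0 := Nat.cast_ne_zero.mpr hm.ne'
        have hm1R : ((m : ℝ) + 1) ≠ 0 := by positivity
        have h1 : ⟪T ((v j : E)), ((v j : E))⟫ = LinearMap.trace ℝ K T' / m := by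
          rw [← hinner]; exact hv_q j
        simp only [Fin.cons_succ]
        rw [h1, htrK']
        push_cast
        field_simp
        ring

lemma trace_toEuclideanLin_eq {n : ℕ} (B : Matrix (Fin n) (Fin n) ℝ) :
    LinearMap.trace ℝ (EuclideanSpace ℝ (Fin n)) (Matrix.toEuclideanLin B) = B.trace := by
  classical
  rw [LinearMap.trace_eq_matrix_trace ℝ (EuclideanSpace.basisFun (Fin n) ℝ).toBasis
    (Matrix.toEuclideanLin B), Matrix.trace, Matrix.trace]
  congr 1; ext i
  simp [Matrix.diag_apply, LinearMap.toMatrix_apply, Matrix.toEuclideanLin_apply,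
    EuclideanSpace.basisFun_apply, Matrix.mulVec_single]

/-- For every real symmetric `n × n` matrix `B` there is an orthonormal
basis `u₁,…,uₙ` of ℝⁿ with all diagonal entries `⟨B uᵢ, uᵢ⟩` equal to `trace B / n`. -/
theorem exists_orthonormal_basis_equal_diagonal
    (n : ℕ) (hn : 0 < n) (B : Matrix (Fin n) (Fin n) ℝ) (hB : B.IsSymm) :
    ∃ u : Fin n → EuclideanSpace ℝ (Fin n),
      Orthonormal ℝ u ∧
      Submodule.span ℝ (Set.range u) = ⊤ ∧
      ∀ i, (inner ℝ (Matrix.toEuclideanLin B (u i)) (u i) : ℝ) = B.trace / n := by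
  have hHerm : B.IsHermitian := by
    rw [Matrix.IsHermitian, Matrix.conjTranspose_eq_transpose_of_trivial]; exact hB
  have hsym := (Matrix.isHermitian_iff_isSymmetric).mp hHerm
  obtain ⟨u, h1, h2, h3⟩ := aux_equal_diag n (Matrix.toEuclideanLin B) hsym
    finrank_euclideanSpace_fin
  refine ⟨u, h1, h2, fun i => ?_⟩
  rw [h3 i, trace_toEuclideanLin_eq]
end
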